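/- Concave-convex regret decomposition, reward part (Proposition C.2): Let f : ℝ → ℝ be L-Lipschitz. Fix a true transition function p★, true reward r★ : S × A → [0,1], true consumptions c★_i : S × A → [0,1] (i ∈ D), estimates p̂, r̂, (ĉ_i)_{i∈D}, a bonus b : S × A → ℝ with b ≥ 0, and a function g : ℝ^D → ℝ. Let π★ be a policy with g( (V_{c★_i}^{π★,p★}(s0,1))_{i∈D} ) ≤ 0, and assume the bonus is valid with respect to π★ for the reward and each consumption objective (as in Definition 3.1). Let (π_k, r^{(k)}) be an optimal solution of the ConvexConPlanner program: |r^{(k)}(s,a) − r̂(s,a)| ≤ b(s,a) for all s, a; there exist c_i with |c_i(s,a) − ĉ_i(s,a)| ≤ b(s,a) and g( (V_{c_i}^{π_k,p̂}(s0,1))_{i∈D} ) ≤ 0; and f(V_{r^{(k)}}^{π_k,p̂}(s0,1)) ≥ f(V_{r'}^{π,p̂}(s0,1)) for every policy π and reward r' with |r'(s,a) − r̂(s,a)| ≤ b(s,a) that is feasible for the program's constraint. Then f(V_{r★}^{π★,p★}(s0,1)) − f(V_{r★}^{π_k,p★}(s0,1)) ≤ L · E^{π_k,p★}[ Σ_{h=1}^H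 | Bell_{r^{(k)}}^{π_k,p̂}(s_h, a_h, h) | | s_1 = s0 ], where the Bellman error is taken with respect to the true pair (p★, r★). -/

import Mathlib

open Finset

section MDPDefs

variable {S A : Type*} [Fintype S] [Fintype A]

/-- Expected cumulative sum of a step-dependent objective `φ h s a`, defined by
backward recursion on the number `n` of remaining steps, where `h` is the current stage. -/
noncomputable def EValAux (π : ℕ → S → PMF A) (p : S → A → PMF S)
    (φ : ℕ → S → A → ℝ) : ℕ → ℕ → S → ℝ
  | 0, _, _ => 0
  | n + 1, h, s =>
      ∑ a : A, (π h s a).toReal *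
        (φ h s a + ∑ s' : S, (p s a s').toReal * EValAux π p φ n (h + 1) s')

/-- `EVal H π p φ h s = E^{π,p}[ Σ_{h'=h}^H φ(h', s_{h'}, a_{h'}) | s_h = s ]`. -/
noncomputable def EVal (H : ℕ) (π : ℕ → S → PMF A) (p : S → A → PMF S)
    (φ : ℕ → S → A → ℝ) (h : ℕ) (s : S) : ℝ :=
  EValAux π p φ (H + 1 - h) h s

/-- Value function `V_m^{π,p}(s,h)` of the objective `m` for horizon `H`. -/
noncomputable def Vf (H : ℕ) (π : ℕ → S → PMF A) (p : S → A → PMF S)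
    (m : S → A → ℝ) (h : ℕ) (s : S) : ℝ :=
  EVal H π p (fun _ s a => m s a) h s

/-- Q-function `Q_m^{π,p}(s,a,h)` of the objective `m` for horizon `H`. -/
noncomputable def Qf (H : ℕ) (π : ℕ → S → PMF A) (p : S → A → PMF S)
    (m : S → A → ℝ) (h : ℕ) (s : S) (a : A) : ℝ :=
  m s a + ∑ s' : S, (p s a s').toReal * Vf H π p m (h + 1) s'

/-- Bellman error of the model `(p, m)` under policy `π`, with respect to the
true transition function `pstar` and true objective `mstar`. -/
noncomputable def Bell (H : ℕ) (π : ℕ → S → PMF A) (p : S → A → PMF S) (m : S → A → ℝ)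
    (pstar : S → A → PMF S) (mstar : S → A → ℝ) (h : ℕ) (s : S) (a : A) : ℝ :=
  Qf H π p m h s a - (mstar s a + ∑ s' : S, (pstar s a s').toReal * Vf H π p m (h + 1) s')

end MDPDefs

section Lemmas

variable {S A : Type*} [Fintype S] [Fintype A]

lemma EValAux_succ (π : ℕ → S → PMF A) (p : S → A → PMF S) (φ : ℕ → S → A → ℝ)
    (n h : ℕ) (s : S) :
    EValAux π p φ (n + 1) h s =
      ∑ a : A, (π h s a).toReal *
        (φ h s a + ∑ s' : S, (p s a s').toReal * EValAux π p φ n (h + 1) s') := rfl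

lemma EValAux_mono (π : ℕ → S → PMF A) (p : S → A → PMF S) (φ ψ : ℕ → S → A → ℝ) :
    ∀ (n h : ℕ) (s : S), (∀ h' s' a', h ≤ h' → h' < h + n → φ h' s' a' ≤ ψ h' s' a') →
      EValAux π p φ n h s ≤ EValAux π p ψ n h s := by
  intro n
  induction n with
  | zero => intro h s _; simp [EValAux]
  | succ n ih =>
    intro h s hle
    rw [EValAux_succ, EValAux_succ]
    refine Finset.sum_le_sum fun a _ => ?_
    refine mul_le_mul_of_nonneg_left ?_ ENNReal.toReal_nonneg
    refine add_le_add (hle h s a le_rfl (by omega)) ?_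
    refine Finset.sum_le_sum fun s' _ => ?_
    exact mul_le_mul_of_nonneg_left
      (ih (h + 1) s' (fun h'' s'' a'' h1 h2 => hle h'' s'' a'' (by omega) (by omega)))
      ENNReal.toReal_nonneg

lemma EValAux_zero (π : ℕ → S → PMF A) (p : S → A → PMF S) :
    ∀ (n h : ℕ) (s : S), EValAux π p (fun _ _ _ => (0 : ℝ)) n h s = 0 := by
  intro n
  induction n with
  | zero => intro h s; simp [EValAux]
  | succ n ih => intro h s; simp [EValAux_succ, ih]

lemma EValAux_abs (π : ℕ → S → PMF A) (p : S → A → PMF S) (φ : ℕ → S → A → ℝ) :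
    ∀ (n h : ℕ) (s : S),
      |EValAux π p φ n h s| ≤ EValAux π p (fun h s a => |φ h s a|) n h s := by
  intro n
  induction n with
  | zero => intro h s; simp [EValAux]
  | succ n ih =>
    intro h s
    rw [EValAux_succ, EValAux_succ]
    calc |∑ a : A, (π h s a).toReal *
        (φ h s a + ∑ s' : S, (p s a s').toReal * EValAux π p φ n (h + 1) s')|
        ≤ ∑ a : A, |(π h s a).toReal *
        (φ h s a + ∑ s' : S, (p s a s').toReal * EValAux π p φ n (h + 1) s')| :=
          Finset.abs_sum_le_sum_abs _ _
      _ ≤ ∑ a : A, (π h s a).toReal *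
        (|φ h s a| + ∑ s' : S, (p s a s').toReal * EValAux π p (fun h s a => |φ h s a|) n (h + 1) s') := by
          refine Finset.sum_le_sum fun a _ => ?_
          rw [abs_mul, abs_of_nonneg (ENNReal.toReal_nonneg)]
          refine mul_le_mul_of_nonneg_left ?_ ENNReal.toReal_nonneg
          refine le_trans (abs_add_le _ _) (add_le_add le_rfl ?_)
          refine le_trans (Finset.abs_sum_le_sum_abs _ _) ?_
          refine Finset.sum_le_sum fun s' _ => ?_
          rw [abs_mul, abs_of_nonneg (ENNReal.toReal_nonneg)]
          exact mul_le_mul_of_nonneg_left (ih (h + 1) s') ENNReal.toReal_nonneg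

lemma EValAux_affine (π : ℕ → S → PMF A) (p : S → A → PMF S) (φ ψ : ℕ → S → A → ℝ) (t : ℝ) :
    ∀ (n h : ℕ) (s : S),
      EValAux π p (fun h s a => φ h s a + t * ψ h s a) n h s =
        EValAux π p φ n h s + t * EValAux π p ψ n h s := by
  intro n
  induction n with
  | zero => intro h s; simp [EValAux]
  | succ n ih =>
    intro h s
    rw [EValAux_succ, EValAux_succ, EValAux_succ]
    rw [Finset.mul_sum, ← Finset.sum_add_distrib]
    refine Finset.sum_congr rfl fun a _ => ?_
    simp only [ih]
    have : ∑ s' : S, (p s a s').toReal *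
        (EValAux π p φ n (h + 1) s' + t * EValAux π p ψ n (h + 1) s') =
        (∑ s' : S, (p s a s').toReal * EValAux π p φ n (h + 1) s') +
          t * ∑ s' : S, (p s a s').toReal * EValAux π p ψ n (h + 1) s' := by
      rw [Finset.mul_sum, ← Finset.sum_add_distrib]
      exact Finset.sum_congr rfl fun s' _ => by ring
    rw [this]; ring

/-- Simulation lemma. -/
lemma sim_lemma (H : ℕ) (π : ℕ → S → PMF A) (p q : S → A → PMF S) (M M' : S → A → ℝ) :
    ∀ (n h : ℕ) (s : S), h + n = H + 1 →
      EValAux π p (fun _ s a => M s a) n h s - EValAux π q (fun _ s a => M' s a) n h s =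
        EValAux π q (fun h' s a => (M s a - M' s a) +
          ∑ s' : S, ((p s a s').toReal - (q s a s').toReal) * Vf H π p M (h' + 1) s') n h s := by
  intro n
  induction n with
  | zero => intro h s _; simp [EValAux]
  | succ n ih =>
    intro h s hn
    rw [EValAux_succ, EValAux_succ, EValAux_succ, ← Finset.sum_sub_distrib]
    refine Finset.sum_congr rfl fun a _ => ?_
    have hVf : ∀ s' : S, Vf H π p M (h + 1) s' = EValAux π p (fun _ s a => M s a) n (h + 1) s' := by
      intro s'
      have : H + 1 - (h + 1) = n := by omega
      simp only [Vf, EVal, this]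
    have h1 : (∑ s' : S, (p s a s').toReal * EValAux π p (fun _ s a => M s a) n (h + 1) s') -
        (∑ s' : S, (q s a s').toReal * EValAux π q (fun _ s a => M' s a) n (h + 1) s') =
        (∑ s' : S, ((p s a s').toReal - (q s a s').toReal) * Vf H π p M (h + 1) s') +
          ∑ s' : S, (q s a s').toReal *
            (EValAux π p (fun _ s a => M s a) n (h + 1) s' -
              EValAux π q (fun _ s a => M' s a) n (h + 1) s') := by
      rw [← Finset.sum_sub_distrib, ← Finset.sum_add_distrib]
      refine Finset.sum_congr rfl fun s' _ => ?_
      rw [hVf s']; ring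
    have h2 : ∀ s' : S, EValAux π p (fun _ s a => M s a) n (h + 1) s' -
        EValAux π q (fun _ s a => M' s a) n (h + 1) s' =
        EValAux π q (fun h' s a => (M s a - M' s a) +
          ∑ s' : S, ((p s a s').toReal - (q s a s').toReal) * Vf H π p M (h' + 1) s') n (h + 1) s' :=
      fun s' => ih (h + 1) s' (by omega)
    rw [← mul_sub]
    congr 1
    calc (M s a + ∑ s' : S, (p s a s').toReal * EValAux π p (fun _ s a => M s a) n (h + 1) s')
          - (M' s a + ∑ s' : S, (q s a s').toReal * EValAux π q (fun _ s a => M' s a) n (h + 1) s')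
        = (M s a - M' s a) +
            ((∑ s' : S, (p s a s').toReal * EValAux π p (fun _ s a => M s a) n (h + 1) s') -
             (∑ s' : S, (q s a s').toReal * EValAux π q (fun _ s a => M' s a) n (h + 1) s')) := by
          ring
      _ = _ := by rw [h1]; simp only [h2]; ring

end Lemmas

section Main

variable {S A : Type*} [Fintype S] [Fintype A]

/-- Given a valid bonus, there is an objective `m'` within `b` of `mhat` whose value under
`(πstar, phat)` exactly matches the true value of `mstar` under `(πstar, pstar)`. -/
lemma exists_matching (H : ℕ) (s0 : S) (πstar : ℕ → S → PMF A) (pstar phat : S → A → PMF S)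
    (mstar mhat b : S → A → ℝ) (hb : ∀ s a, 0 ≤ b s a)
    (hvalid : ∀ s a h, 1 ≤ h → h ≤ H →
      |(mhat s a - mstar s a) + ∑ s' : S, ((phat s a s').toReal - (pstar s a s').toReal) *
          Vf H πstar pstar mstar (h + 1) s'| ≤ b s a) :
    ∃ m' : S → A → ℝ, (∀ s a, |m' s a - mhat s a| ≤ b s a) ∧
      Vf H πstar phat m' 1 s0 = Vf H πstar pstar mstar 1 s0 := by
  set Vb := Vf H πstar phat b 1 s0 with hVbdef
  set Vm := Vf H πstar phat mhat 1 s0 with hVmdef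
  set T := Vf H πstar pstar mstar 1 s0 with hTdef
  have hVb : 0 ≤ Vb := by
    have h0 := EValAux_mono πstar phat (fun _ _ _ => (0 : ℝ)) (fun _ s a => b s a)
      (H + 1 - 1) 1 s0 (fun h' s' a' _ _ => hb s' a')
    rw [EValAux_zero] at h0
    simpa [hVbdef, Vf, EVal] using h0
  have hG : ∀ t : ℝ, Vf H πstar phat (fun s a => mhat s a + t * b s a) 1 s0 = Vm + t * Vb := by
    intro t
    simp only [hVmdef, hVbdef, Vf, EVal]
    exact EValAux_affine πstar phat (fun _ s a => mhat s a) (fun _ s a => b s a) t (H + 1 - 1) 1 s0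
  -- upper bound: T ≤ Vm + Vb
  have hhi : T ≤ Vm + Vb := by
    have hsim := sim_lemma H πstar pstar phat mstar (fun s a => mhat s a + 1 * b s a)
      (H + 1 - 1) 1 s0 (by omega)
    have hle : EValAux πstar phat (fun h' s a => (mstar s a - (mhat s a + 1 * b s a)) +
        ∑ s' : S, ((pstar s a s').toReal - (phat s a s').toReal) *
          Vf H πstar pstar mstar (h' + 1) s') (H + 1 - 1) 1 s0 ≤ 0 := by
      have := EValAux_mono πstar phat
        (fun h' s a => (mstar s a - (mhat s a + 1 * b s a)) +
          ∑ s' : S, ((pstar s a s').toReal - (phat s a s').toReal) *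
            Vf H πstar pstar mstar (h' + 1) s')
        (fun _ _ _ => (0 : ℝ)) (H + 1 - 1) 1 s0 ?_
      · rwa [EValAux_zero] at this
      · intro h' s' a' h1 h2
        have hv := hvalid s' a' h' h1 (by omega)
        have hsum : ∑ x : S, ((pstar s' a' x).toReal - (phat s' a' x).toReal) *
            Vf H πstar pstar mstar (h' + 1) x =
            -∑ x : S, ((phat s' a' x).toReal - (pstar s' a' x).toReal) *
              Vf H πstar pstar mstar (h' + 1) x := by
          rw [← Finset.sum_neg_distrib]
          exact Finset.sum_congr rfl fun x _ => by ring
        rw [hsum]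
        have := (abs_le.mp hv).1
        linarith
    have hT : EValAux πstar pstar (fun _ s a => mstar s a) (H + 1 - 1) 1 s0 = T := by
      simp [hTdef, Vf, EVal]
    have hG1 : EValAux πstar phat (fun _ s a => mhat s a + 1 * b s a) (H + 1 - 1) 1 s0
        = Vm + 1 * Vb := by
      have := hG 1
      simpa [Vf, EVal] using this
    rw [hT, hG1] at hsim
    linarith [hsim ▸ hle, hle, hsim.symm ▸ hle]
  -- lower bound: Vm - Vb ≤ T
  have hlo : Vm - Vb ≤ T := by
    have hsim := sim_lemma H πstar pstar phat mstar (fun s a => mhat s a + (-1) * b s a)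
      (H + 1 - 1) 1 s0 (by omega)
    have hle : 0 ≤ EValAux πstar phat (fun h' s a => (mstar s a - (mhat s a + (-1) * b s a)) +
        ∑ s' : S, ((pstar s a s').toReal - (phat s a s').toReal) *
          Vf H πstar pstar mstar (h' + 1) s') (H + 1 - 1) 1 s0 := by
      have := EValAux_mono πstar phat (fun _ _ _ => (0 : ℝ))
        (fun h' s a => (mstar s a - (mhat s a + (-1) * b s a)) +
          ∑ s' : S, ((pstar s a s').toReal - (phat s a s').toReal) *
            Vf H πstar pstar mstar (h' + 1) s') (H + 1 - 1) 1 s0 ?_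
      · rwa [EValAux_zero] at this
      · intro h' s' a' h1 h2
        have hv := hvalid s' a' h' h1 (by omega)
        have hsum : ∑ x : S, ((pstar s' a' x).toReal - (phat s' a' x).toReal) *
            Vf H πstar pstar mstar (h' + 1) x =
            -∑ x : S, ((phat s' a' x).toReal - (pstar s' a' x).toReal) *
              Vf H πstar pstar mstar (h' + 1) x := by
          rw [← Finset.sum_neg_distrib]
          exact Finset.sum_congr rfl fun x _ => by ring
        rw [hsum]
        have := (abs_le.mp hv).2
        linarith
    have hT : EValAux πstar pstar (fun _ s a => mstar s a) (H + 1 - 1) 1 s0 = T := by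
      simp [hTdef, Vf, EVal]
    have hGm1 : EValAux πstar phat (fun _ s a => mhat s a + (-1) * b s a) (H + 1 - 1) 1 s0
        = Vm + (-1) * Vb := by
      have := hG (-1)
      simpa [Vf, EVal] using this
    rw [hT, hGm1] at hsim
    linarith
  -- choose the interpolation parameter
  by_cases hVb0 : Vb = 0
  · refine ⟨mhat, fun s a => by simpa using hb s a, ?_⟩
    have hVm : Vf H πstar phat mhat 1 s0 = Vm := rfl
    have : Vm = T := by rw [hVb0] at hhi hlo; linarith
    rw [hVm, this]
  · have hVbpos : 0 < Vb := lt_of_le_of_ne hVb (Ne.symm hVb0)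
    set t0 : ℝ := (T - Vm) / Vb with ht0def
    have ht0 : |t0| ≤ 1 := by
      rw [ht0def, abs_div, abs_of_pos hVbpos, div_le_one hVbpos, abs_le]
      constructor <;> linarith
    refine ⟨fun s a => mhat s a + t0 * b s a, fun s a => ?_, ?_⟩
    · have : |mhat s a + t0 * b s a - mhat s a| = |t0| * b s a := by
        rw [add_sub_cancel_left, abs_mul, abs_of_nonneg (hb s a)]
      rw [this]
      nlinarith [hb s a, abs_nonneg t0]
    · rw [hG t0, ht0def]
      field_simp
      ring

end Main

/-- **Concave-convex regret decomposition, reward part (Proposition C.2).** -/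
theorem concave_convex_regret_decomposition_reward
    {S A D : Type*} [Fintype S] [Fintype A] [Fintype D] [Nonempty S] [Nonempty A]
    (H : ℕ) (s0 : S) (L : ℝ)
    (f : ℝ → ℝ) (g : (D → ℝ) → ℝ)
    (hf : ∀ x y : ℝ, |f x - f y| ≤ L * |x - y|)
    (pstar phat : S → A → PMF S)
    (rstar rhat : S → A → ℝ) (cstar chat : D → S → A → ℝ) (b : S → A → ℝ)
    (hrstar : ∀ s a, rstar s a ∈ Set.Icc (0 : ℝ) 1)
    (hcstar : ∀ i s a, cstar i s a ∈ Set.Icc (0 : ℝ) 1)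
    (hb : ∀ s a, 0 ≤ b s a)
    (πstar : ℕ → S → PMF A)
    -- π★ satisfies the true convex constraint
    (hgstar : g (fun i => Vf H πstar pstar (cstar i) 1 s0) ≤ 0)
    -- the bonus is valid with respect to π★ for the reward objective ...
    (hvalid_r : ∀ s a h, 1 ≤ h → h ≤ H →
      |(rhat s a - rstar s a)
          + ∑ s' : S, ((phat s a s').toReal - (pstar s a s').toReal) *
              Vf H πstar pstar rstar (h + 1) s'|
        ≤ b s a)
    -- ... and for each consumption objective
    (hvalid_c : ∀ i : D, ∀ s a h, 1 ≤ h → h ≤ H →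
      |(chat i s a - cstar i s a)
          + ∑ s' : S, ((phat s a s').toReal - (pstar s a s').toReal) *
              Vf H πstar pstar (cstar i) (h + 1) s'|
        ≤ b s a)
    (πk : ℕ → S → PMF A) (rk : S → A → ℝ)
    -- (πk, rk) lies in the feasible region of ConvexConPlanner:
    (hrk : ∀ s a, |rk s a - rhat s a| ≤ b s a)
    (hfeas_k : ∃ c : D → S → A → ℝ,
      (∀ i s a, |c i s a - chat i s a| ≤ b s a)
      ∧ g (fun i => Vf H πk phat (c i) 1 s0) ≤ 0)
    -- ... and is optimal for the ConvexConPlanner program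
    (hopt_k : ∀ π : ℕ → S → PMF A, ∀ r' : S → A → ℝ,
      (∀ s a, |r' s a - rhat s a| ≤ b s a) →
      (∃ c : D → S → A → ℝ,
        (∀ i s a, |c i s a - chat i s a| ≤ b s a)
        ∧ g (fun i => Vf H π phat (c i) 1 s0) ≤ 0) →
      f (Vf H πk phat rk 1 s0) ≥ f (Vf H π phat r' 1 s0)) :
    f (Vf H πstar pstar rstar 1 s0) - f (Vf H πk pstar rstar 1 s0)
      ≤ L * EVal H πk pstar
            (fun h s a => |Bell H πk phat rk pstar rstar h s a|) 1 s0 := by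
  -- L is nonnegative
  have hL : 0 ≤ L := by
    have h01 := hf 0 1
    have h2 : |(0 : ℝ) - 1| = 1 := by norm_num
    rw [h2, mul_one] at h01
    linarith [abs_nonneg (f 0 - f 1)]
  -- matching reward objective for πstar
  obtain ⟨r', hr'b, hr'V⟩ := exists_matching H s0 πstar pstar phat rstar rhat b hb hvalid_r
  -- matching consumption objectives for πstar
  have hcex : ∀ i : D, ∃ c' : S → A → ℝ, (∀ s a, |c' s a - chat i s a| ≤ b s a) ∧
      Vf H πstar phat c' 1 s0 = Vf H πstar pstar (cstar i) 1 s0 :=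
    fun i => exists_matching H s0 πstar pstar phat (cstar i) (chat i) b hb (hvalid_c i)
  choose c hc1 hc2 using hcex
  have hgfeas : g (fun i => Vf H πstar phat (c i) 1 s0) ≤ 0 := by
    have : (fun i => Vf H πstar phat (c i) 1 s0)
        = fun i => Vf H πstar pstar (cstar i) 1 s0 := funext fun i => hc2 i
    rw [this]; exact hgstar
  have hopt := hopt_k πstar r' hr'b ⟨c, fun i s a => hc1 i s a, hgfeas⟩
  rw [hr'V] at hopt
  -- simulation lemma for πk
  have hsim := sim_lemma H πk phat pstar rk rstar (H + 1 - 1) 1 s0 (by omega)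
  have hA : EValAux πk phat (fun _ s a => rk s a) (H + 1 - 1) 1 s0
      = Vf H πk phat rk 1 s0 := rfl
  have hB : EValAux πk pstar (fun _ s a => rstar s a) (H + 1 - 1) 1 s0
      = Vf H πk pstar rstar 1 s0 := rfl
  rw [hA, hB] at hsim
  set Phik : ℕ → S → A → ℝ := fun h' s a => (rk s a - rstar s a) +
      ∑ s' : S, ((phat s a s').toReal - (pstar s a s').toReal) * Vf H πk phat rk (h' + 1) s'
    with hPhik
  have hBellPhi : (fun h s a => |Bell H πk phat rk pstar rstar h s a|)
      = fun h s a => |Phik h s a| := by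
    funext h s a
    congr 1
    simp only [Bell, Qf, hPhik]
    have : ∑ s' : S, ((phat s a s').toReal - (pstar s a s').toReal) *
        Vf H πk phat rk (h + 1) s' =
        (∑ s' : S, (phat s a s').toReal * Vf H πk phat rk (h + 1) s') -
          ∑ s' : S, (pstar s a s').toReal * Vf H πk phat rk (h + 1) s' := by
      rw [← Finset.sum_sub_distrib]
      exact Finset.sum_congr rfl fun x _ => by ring
    rw [this]; ring
  have habs : |Vf H πk phat rk 1 s0 - Vf H πk pstar rstar 1 s0|
      ≤ EVal H πk pstar (fun h s a => |Bell H πk phat rk pstar rstar h s a|) 1 s0 := by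
    rw [hsim, hBellPhi]
    exact EValAux_abs πk pstar Phik (H + 1 - 1) 1 s0
  have hlip := hf (Vf H πk phat rk 1 s0) (Vf H πk pstar rstar 1 s0)
  have h1 : f (Vf H πk phat rk 1 s0) - f (Vf H πk pstar rstar 1 s0)
      ≤ L * EVal H πk pstar (fun h s a => |Bell H πk phat rk pstar rstar h s a|) 1 s0 := by
    calc f (Vf H πk phat rk 1 s0) - f (Vf H πk pstar rstar 1 s0)
        ≤ |f (Vf H πk phat rk 1 s0) - f (Vf H πk pstar rstar 1 s0)| := le_abs_self _
      _ ≤ L * |Vf H πk phat rk 1 s0 - Vf H πk pstar rstar 1 s0| := hlip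
      _ ≤ L * EVal H πk pstar (fun h s a => |Bell H πk phat rk pstar rstar h s a|) 1 s0 :=
          mul_le_mul_of_nonneg_left habs hL
  linarith
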